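/- The function d(A,B) = (1/α)(tr[A^{2α} + B^{2α} − 2(A^α B^{2α} A^α)^{1/2}])^{1/2} is a metric on the set of n×n real symmetric positive semi-definite matrices for every fixed α > 0. -/

import Mathlib

open Classical in
/-- The positive semi-definite square root of a positive semi-definite real matrix
(junk value `0` if the matrix is not positive semi-definite). -/
noncomputable def psdSqrt {n : ℕ} (M : Matrix (Fin n) (Fin n) ℝ) : Matrix (Fin n) (Fin n) ℝ :=
  if h : M.PosSemidef then
    (h.1.eigenvectorUnitary : Matrix (Fin n) (Fin n) ℝ) *
      Matrix.diagonal (fun i => Real.sqrt (h.1.eigenvalues i)) *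
      (star h.1.eigenvectorUnitary : Matrix (Fin n) (Fin n) ℝ)
  else 0

open Classical in
/-- The real power `M ^ r` of a symmetric real matrix, defined through the spectral
functional calculus: `M ^ r = U diag(λᵢ^r) Uᵀ` (with `0 ^ r = 0` for `r > 0`).
Junk value `0` if `M` is not symmetric. -/
noncomputable def matPow {n : ℕ} (M : Matrix (Fin n) (Fin n) ℝ) (r : ℝ) :
    Matrix (Fin n) (Fin n) ℝ :=
  if h : M.IsHermitian then
    (h.eigenvectorUnitary : Matrix (Fin n) (Fin n) ℝ) *
      Matrix.diagonal (fun i => h.eigenvalues i ^ r) *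
      (star h.eigenvectorUnitary : Matrix (Fin n) (Fin n) ℝ)
  else 0

section AlphaProcrustes
open Matrix
open scoped MatrixOrder
variable {n : ℕ}


lemma psdSqrt_of_posSemidef {M : Matrix (Fin n) (Fin n) ℝ} (h : M.PosSemidef) :
    psdSqrt M = CFC.sqrt M := by
  rw [psdSqrt, dif_pos h, CFC.sqrt_eq_cfc, cfc_nnreal_eq_real _ M, h.1.cfc_eq, IsHermitian.cfc,
    RCLike.ofReal_real_eq_id, Unitary.conjStarAlgAut_apply]
  congr 3
  funext i
  simp only [Function.comp_apply, id_eq, Real.coe_sqrt, Real.coe_toNNReal',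
    max_eq_left (h.eigenvalues_nonneg i)]

lemma psdSqrt_eq {M R : Matrix (Fin n) (Fin n) ℝ} (hM : M.PosSemidef) (hR : R.PosSemidef)
    (h : R * R = M) : psdSqrt M = R := by
  rw [psdSqrt_of_posSemidef hM]
  exact CFC.sqrt_unique h hR.nonneg

lemma psdSqrt_posSemidef {M : Matrix (Fin n) (Fin n) ℝ} (h : M.PosSemidef) :
    (psdSqrt M).PosSemidef := by rw [psdSqrt_of_posSemidef h]; exact (CFC.sqrt_nonneg M).posSemidef

lemma star_eq_transpose (M : Matrix (Fin n) (Fin n) ℝ) : star M = Mᵀ := by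
  rw [Matrix.star_eq_conjTranspose, conjTranspose_eq_transpose_of_trivial]

lemma herm_transpose {M : Matrix (Fin n) (Fin n) ℝ} (h : M.IsHermitian) : Mᵀ = M := by
  rw [← conjTranspose_eq_transpose_of_trivial]; exact h

lemma psd_mul_self {X : Matrix (Fin n) (Fin n) ℝ} (hX : X.PosSemidef) :
    (X * X).PosSemidef := by
  have := posSemidef_conjTranspose_mul_self X
  rwa [hX.1] at this

-- ∑ of squares version of the Frobenius norm
lemma fro_sum (M : Matrix (Fin n) (Fin n) ℝ) :
    (Mᵀ * M).trace = ∑ i, ∑ j, ‖M i j‖ ^ 2 := by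
  rw [Matrix.trace]
  simp only [Matrix.diag_apply, Matrix.mul_apply, Matrix.transpose_apply, Real.norm_eq_abs,
    sq_abs]
  rw [Finset.sum_comm]
  congr 1; ext i
  congr 1; ext j
  rw [pow_two]

attribute [local instance] Matrix.frobeniusSeminormedAddCommGroup

lemma sqrt_fro_eq_norm (M : Matrix (Fin n) (Fin n) ℝ) :
    Real.sqrt ((Mᵀ * M).trace) = ‖M‖ := by
  rw [Matrix.frobenius_norm_def, ← Real.sqrt_eq_rpow, fro_sum]
  norm_num

lemma fro_nonneg (M : Matrix (Fin n) (Fin n) ℝ) : 0 ≤ (Mᵀ * M).trace := by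
  rw [fro_sum]; positivity

lemma fro_eq_zero {M : Matrix (Fin n) (Fin n) ℝ} (h : (Mᵀ * M).trace = 0) : M = 0 := by
  rw [fro_sum] at h
  ext i j
  have h1 := (Finset.sum_eq_zero_iff_of_nonneg (fun i _ => by positivity)).mp h i
    (Finset.mem_univ i)
  have h2 := (Finset.sum_eq_zero_iff_of_nonneg (fun j _ => by positivity)).mp h1 j
    (Finset.mem_univ j)
  simpa using h2

lemma vec_sq (W : Matrix (Fin n) (Fin n) ℝ) (hW : Wᵀ * W = 1) (v : Fin n → ℝ) :
    (v ᵥ* W) ⬝ᵥ (v ᵥ* W) = v ⬝ᵥ v := by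
  have h1 : W * Wᵀ = 1 := mul_eq_one_comm.mp hW
  calc (v ᵥ* W) ⬝ᵥ (v ᵥ* W) = (v ᵥ* W) ⬝ᵥ (Wᵀ *ᵥ v) := by rw [Matrix.mulVec_transpose]
    _ = ((v ᵥ* W) ᵥ* Wᵀ) ⬝ᵥ v := by rw [Matrix.dotProduct_mulVec]
    _ = (v ᵥ* (W * Wᵀ)) ⬝ᵥ v := by rw [Matrix.vecMul_vecMul]
    _ = v ⬝ᵥ v := by rw [h1, Matrix.vecMul_one]

lemma trace_orth_mul_psd_le (W P : Matrix (Fin n) (Fin n) ℝ) (hW : Wᵀ * W = 1)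
    (hP : P.PosSemidef) : (W * P).trace ≤ P.trace := by
  set Q := CFC.sqrt P with hQdef
  have hQ : Q * Q = P := CFC.sqrt_mul_sqrt_self P hP.nonneg
  have hQh : Qᵀ = Q := herm_transpose (CFC.sqrt_nonneg P).posSemidef.1
  have key : (W * P).trace = ∑ i, ((Q i) ᵥ* W) ⬝ᵥ (Q i) := by
    rw [← hQ, ← Matrix.mul_assoc, Matrix.trace_mul_cycle]
    rw [Matrix.trace]
    congr 1; ext i
    simp only [Matrix.diag_apply, Matrix.mul_apply, dotProduct, Matrix.vecMul,
      dotProduct]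
    congr 1; ext j
    rw [show Q j i = Q i j from congrFun (congrFun hQh i) j]
  have keyP : P.trace = ∑ i, (Q i) ⬝ᵥ (Q i) := by
    rw [← hQ, Matrix.trace]
    congr 1; ext i
    simp only [Matrix.diag_apply, Matrix.mul_apply, dotProduct]
    congr 1; ext j
    rw [show Q j i = Q i j from congrFun (congrFun hQh i) j]
  rw [key, keyP]
  apply Finset.sum_le_sum
  intro i _
  have cs := Real.sum_mul_le_sqrt_mul_sqrt Finset.univ (fun j => (Q i ᵥ* W) j) (fun j => Q i j)
  have h1 : (Q i ᵥ* W) ⬝ᵥ (Q i ᵥ* W) = Q i ⬝ᵥ Q i := vec_sq W hW (Q i)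
  have h2 : ∀ v : Fin n → ℝ, v ⬝ᵥ v = ∑ j, v j ^ 2 := by
    intro v; exact Finset.sum_congr rfl fun j _ => (pow_two (v j)).symm
  calc (Q i ᵥ* W) ⬝ᵥ Q i = ∑ j, (Q i ᵥ* W) j * Q i j := rfl
    _ ≤ √(∑ j, (Q i ᵥ* W) j ^ 2) * √(∑ j, Q i j ^ 2) := cs
    _ = √(∑ j, Q i j ^ 2) * √(∑ j, Q i j ^ 2) := by rw [← h2, h1, h2]
    _ = ∑ j, Q i j ^ 2 := Real.mul_self_sqrt (by positivity)
    _ = Q i ⬝ᵥ Q i := (h2 _).symm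
lemma polar_decomp (M : Matrix (Fin n) (Fin n) ℝ) :
    ∃ V : Matrix (Fin n) (Fin n) ℝ, Vᵀ * V = 1 ∧ M = V * psdSqrt (Mᵀ * M) := by
  have hS : (Mᵀ * M).PosSemidef := by
    have := posSemidef_conjTranspose_mul_self M
    rwa [conjTranspose_eq_transpose_of_trivial] at this
  set S := Mᵀ * M with hSdef
  have hH : S.IsHermitian := hS.1
  set U : Matrix (Fin n) (Fin n) ℝ := (hH.eigenvectorUnitary : Matrix (Fin n) (Fin n) ℝ) with hUdef
  set lam : Fin n → ℝ := hH.eigenvalues with hlamdef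
  have hlam : ∀ i, 0 ≤ lam i := hS.eigenvalues_nonneg
  have hUmem := SetLike.coe_mem hH.eigenvectorUnitary
  have hU1 : star U * U = 1 := (Unitary.mem_iff.mp hUmem).1
  have hU2 : U * star U = 1 := (Unitary.mem_iff.mp hUmem).2
  have hspec : S = U * diagonal lam * star U := by
    have := hH.spectral_theorem
    rwa [RCLike.ofReal_real_eq_id, Function.id_comp] at this
  set R : Matrix (Fin n) (Fin n) ℝ :=
    U * diagonal (fun i => Real.sqrt (lam i)) * star U with hRdef
  have hRpsd : R.PosSemidef := by
    have hd : (diagonal fun i => Real.sqrt (lam i) : Matrix (Fin n) (Fin n) ℝ).PosSemidef :=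
      posSemidef_diagonal_iff.mpr fun i => Real.sqrt_nonneg _
    have := hd.mul_mul_conjTranspose_same U
    rw [hRdef, Matrix.star_eq_conjTranspose]
    exact this
  have hRsq : R * R = S := by
    rw [hRdef, hspec]
    calc U * diagonal (fun i => Real.sqrt (lam i)) * star U *
        (U * diagonal (fun i => Real.sqrt (lam i)) * star U)
        = U * diagonal (fun i => Real.sqrt (lam i)) * (star U * U) *
          diagonal (fun i => Real.sqrt (lam i)) * star U := by
          simp only [Matrix.mul_assoc]
      _ = U * (diagonal (fun i => Real.sqrt (lam i)) * diagonal (fun i => Real.sqrt (lam i))) *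
          star U := by rw [hU1]; simp only [Matrix.mul_one, Matrix.mul_assoc]
      _ = U * diagonal lam * star U := by
          have hdd : (fun i => Real.sqrt (lam i) * Real.sqrt (lam i)) = lam :=
            funext fun i => Real.mul_self_sqrt (hlam i)
          rw [diagonal_mul_diagonal, hdd]
  have hsqrt : psdSqrt S = R := psdSqrt_eq hS hRpsd hRsq
  set N : Matrix (Fin n) (Fin n) ℝ := M * U with hNdef
  have hNtN : Nᵀ * N = diagonal lam := by
    have : Nᵀ * N = (star U) * S * U := by
      rw [hNdef, transpose_mul, ← star_eq_transpose, hSdef]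
      simp only [Matrix.mul_assoc]
    rw [this, hspec]
    calc star U * (U * diagonal lam * star U) * U
        = (star U * U) * diagonal lam * (star U * U) := by simp only [Matrix.mul_assoc]
      _ = diagonal lam := by rw [hU1]; simp
  -- columns of N
  have hcol : ∀ i j : Fin n, (∑ k, N k i * N k j) = diagonal lam i j := by
    intro i j
    rw [← hNtN]
    simp [Matrix.mul_apply]
  have hNzero : ∀ i, lam i = 0 → ∀ j, N j i = 0 := by
    intro i hi j
    have h0 : (∑ k, N k i * N k i) = 0 := by rw [hcol i i]; simp [hi]
    have := (Finset.sum_eq_zero_iff_of_nonneg (fun k _ => mul_self_nonneg (N k i))).mp h0 j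
      (Finset.mem_univ j)
    exact (mul_self_eq_zero).mp this
  classical
  set v : Fin n → EuclideanSpace ℝ (Fin n) :=
    fun i => if lam i = 0 then 0 else (Real.sqrt (lam i))⁻¹ • WithLp.toLp 2 (fun j => N j i) with hvdef
  have hinner : ∀ x y : EuclideanSpace ℝ (Fin n), inner ℝ x y = ∑ j, x j * y j := by
    intro x y
    simp [PiLp.inner_apply, RCLike.inner_apply, mul_comm]
  set s : Set (Fin n) := {i | lam i ≠ 0} with hsdef
  have hvon : Orthonormal ℝ (s.restrict v) := by
    rw [orthonormal_iff_ite]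
    rintro ⟨i, hi⟩ ⟨j, hj⟩
    show inner ℝ (v i) (v j) = _
    have hi' : lam i ≠ 0 := hi
    have hj' : lam j ≠ 0 := hj
    rw [hvdef]
    simp only [if_neg hi', if_neg hj']
    rw [real_inner_smul_left, real_inner_smul_right, hinner]
    have : (∑ k, N k i * N k j) = diagonal lam i j := hcol i j
    rw [show ∑ k, (WithLp.toLp 2 (fun j => N j i) : EuclideanSpace ℝ (Fin n)) k *
      (WithLp.toLp 2 (fun j' => N j' j) : EuclideanSpace ℝ (Fin n)) k = diagonal lam i j from hcol i j]
    by_cases hij : i = j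
    · subst hij
      simp only [diagonal_apply_eq, if_pos rfl]
      have hpos : 0 < lam i := (hlam i).lt_of_ne (Ne.symm hi')
      have hsne : Real.sqrt (lam i) ≠ 0 := ne_of_gt (Real.sqrt_pos.mpr hpos)
      field_simp
      simp [Real.sq_sqrt (hlam i)]
    · have : (⟨i, hi⟩ : s) ≠ ⟨j, hj⟩ := by simp [Subtype.ext_iff, hij]
      rw [if_neg this, diagonal_apply_ne _ hij]
      ring
  obtain ⟨b, hb⟩ := hvon.exists_orthonormalBasis_extension_of_card_eq
    (by simp [finrank_euclideanSpace])
  set Vb : Matrix (Fin n) (Fin n) ℝ := Matrix.of (fun j i => b i j) with hVbdef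
  have hVb : Vbᵀ * Vb = 1 := by
    ext i j
    rw [Matrix.mul_apply, Matrix.one_apply]
    have := (orthonormal_iff_ite.mp b.orthonormal) i j
    rw [hinner] at this
    simpa [hVbdef, Matrix.transpose_apply] using this
  have hVbN : Vb * diagonal (fun i => Real.sqrt (lam i)) = N := by
    ext j i
    rw [Matrix.mul_diagonal]
    by_cases hi : lam i = 0
    · simp [hi, hNzero i hi j, hVbdef]
    · have hbi : b i = v i := hb i hi
      rw [hVbdef]
      show (b i j) * Real.sqrt (lam i) = N j i
      rw [hbi, hvdef]
      simp only [if_neg hi]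
      show ((Real.sqrt (lam i))⁻¹ * N j i) * Real.sqrt (lam i) = N j i
      have hsne : Real.sqrt (lam i) ≠ 0 :=
        Real.sqrt_ne_zero'.mpr ((hlam i).lt_of_ne (Ne.symm hi))
      field_simp
  refine ⟨Vb * star U, ?_, ?_⟩
  · have h1 : (star U)ᵀ = U := by rw [star_eq_transpose, transpose_transpose]
    calc (Vb * star U)ᵀ * (Vb * star U) = (star U)ᵀ * Vbᵀ * (Vb * star U) := by
          rw [transpose_mul]
      _ = U * (Vbᵀ * Vb) * star U := by rw [h1]; simp only [Matrix.mul_assoc]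
      _ = 1 := by rw [hVb, Matrix.mul_one]; exact hU2
  · rw [hsqrt, hRdef]
    calc M = M * (U * star U) := by rw [hU2, Matrix.mul_one]
      _ = N * star U := by rw [hNdef, Matrix.mul_assoc]
      _ = Vb * diagonal (fun i => Real.sqrt (lam i)) * star U := by rw [hVbN]
      _ = Vb * star U * (U * diagonal (fun i => Real.sqrt (lam i)) * star U) := by
          calc Vb * diagonal (fun i => Real.sqrt (lam i)) * star U
              = Vb * (star U * U) * diagonal (fun i => Real.sqrt (lam i)) * star U := by
                rw [hU1, Matrix.mul_one]
            _ = Vb * star U * (U * diagonal (fun i => Real.sqrt (lam i)) * star U) := by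
                simp only [Matrix.mul_assoc]

lemma trace_orth_le (M W : Matrix (Fin n) (Fin n) ℝ) (hW : Wᵀ * W = 1) :
    (W * M).trace ≤ (psdSqrt (Mᵀ * M)).trace := by
  obtain ⟨V, hV, hM⟩ := polar_decomp M
  have hMtM : (Mᵀ * M).PosSemidef := by
    have := posSemidef_conjTranspose_mul_self M
    rwa [conjTranspose_eq_transpose_of_trivial] at this
  have hP := psdSqrt_posSemidef hMtM
  have horth : (W * V)ᵀ * (W * V) = 1 := by
    rw [transpose_mul]
    calc Vᵀ * Wᵀ * (W * V) = Vᵀ * (Wᵀ * W) * V := by simp only [Matrix.mul_assoc]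
      _ = 1 := by rw [hW, Matrix.mul_one, hV]
  calc (W * M).trace = ((W * V) * psdSqrt (Mᵀ * M)).trace := by
        rw [Matrix.mul_assoc]; rw [← hM]
    _ ≤ (psdSqrt (Mᵀ * M)).trace := trace_orth_mul_psd_le _ _ horth hP

lemma exists_orth_trace_eq (M : Matrix (Fin n) (Fin n) ℝ) :
    ∃ V : Matrix (Fin n) (Fin n) ℝ, Vᵀ * V = 1 ∧
      (V * M).trace = (psdSqrt (Mᵀ * M)).trace := by
  obtain ⟨V, hV, hM⟩ := polar_decomp M
  refine ⟨Vᵀ, ?_, ?_⟩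
  · rw [transpose_transpose]; exact mul_eq_one_comm.mp hV
  · calc (Vᵀ * M).trace = (Vᵀ * (V * psdSqrt (Mᵀ * M))).trace := by rw [← hM]
      _ = ((Vᵀ * V) * psdSqrt (Mᵀ * M)).trace := by rw [Matrix.mul_assoc]
      _ = (psdSqrt (Mᵀ * M)).trace := by rw [hV, Matrix.one_mul]

lemma matPow_eq_cfc {A : Matrix (Fin n) (Fin n) ℝ} (hA : A.IsHermitian) (r : ℝ) :
    matPow A r = cfc (fun x : ℝ => x ^ r) A := by
  rw [matPow, dif_pos hA, hA.cfc_eq, Matrix.IsHermitian.cfc]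
  rw [RCLike.ofReal_real_eq_id]
  rfl

lemma continuous_rpow_const {c : ℝ} (hc : 0 ≤ c) : Continuous (fun x : ℝ => x ^ c) :=
  continuous_iff_continuousAt.mpr fun x => Real.continuousAt_rpow_const x c (Or.inr hc)

lemma matPow_injOn {α : ℝ} (hα : 0 < α) {A B : Matrix (Fin n) (Fin n) ℝ}
    (hA : A.PosSemidef) (hB : B.PosSemidef) (h : matPow A α = matPow B α) : A = B := by
  have key : ∀ (C : Matrix (Fin n) (Fin n) ℝ), C.PosSemidef →
      cfc (fun x : ℝ => x ^ (1/α)) (matPow C α) = C := by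
    intro C hC
    rw [matPow_eq_cfc hC.1, ← cfc_comp (fun x : ℝ => x ^ (1/α)) (fun x : ℝ => x ^ α) C
      hC.1.isSelfAdjoint ((continuous_rpow_const (by positivity)).continuousOn)
      ((continuous_rpow_const hα.le).continuousOn)]
    have : (spectrum ℝ C).EqOn ((fun x : ℝ => x ^ (1/α)) ∘ (fun x : ℝ => x ^ α)) id := by
      intro x hx
      have hx0 : 0 ≤ x := by
        rw [hC.1.spectrum_real_eq_range_eigenvalues] at hx
        obtain ⟨i, rfl⟩ := hx
        exact hC.eigenvalues_nonneg i
      show (x ^ α) ^ (1/α) = x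
      rw [← Real.rpow_mul hx0, mul_one_div, div_self hα.ne', Real.rpow_one]
    rw [cfc_congr this, cfc_id ℝ C hC.1.isSelfAdjoint]
  rw [← key A hA, ← key B hB, h]

lemma matPow_posSemidef {A : Matrix (Fin n) (Fin n) ℝ} (hA : A.PosSemidef) (r : ℝ) :
    (matPow A r).PosSemidef := by
  rw [matPow, dif_pos hA.1]
  have hd : (diagonal fun i => hA.1.eigenvalues i ^ r : Matrix (Fin n) (Fin n) ℝ).PosSemidef :=
    posSemidef_diagonal_iff.mpr fun i => Real.rpow_nonneg (hA.eigenvalues_nonneg i) r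
  have := hd.mul_mul_conjTranspose_same (hA.1.eigenvectorUnitary : Matrix (Fin n) (Fin n) ℝ)
  rw [Matrix.star_eq_conjTranspose]
  exact this

lemma matPow_two_mul {A : Matrix (Fin n) (Fin n) ℝ} (hA : A.PosSemidef) {α : ℝ} (hα : 0 < α) :
    matPow A (2 * α) = matPow A α * matPow A α := by
  rw [matPow, matPow, dif_pos hA.1, dif_pos hA.1]
  set U : Matrix (Fin n) (Fin n) ℝ := (hA.1.eigenvectorUnitary : Matrix (Fin n) (Fin n) ℝ)
    with hUdef
  have hUmem := SetLike.coe_mem hA.1.eigenvectorUnitary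
  have hU1 : star U * U = 1 := (Unitary.mem_iff.mp hUmem).1
  have hDD : (diagonal fun i => hA.1.eigenvalues i ^ (2*α) : Matrix (Fin n) (Fin n) ℝ)
      = (diagonal fun i => hA.1.eigenvalues i ^ α) * (diagonal fun i => hA.1.eigenvalues i ^ α)
      := by
    have hfun : (fun i => hA.1.eigenvalues i ^ (2*α))
        = fun i => hA.1.eigenvalues i ^ α * hA.1.eigenvalues i ^ α := by
      funext i
      rcases (hA.eigenvalues_nonneg i).eq_or_lt with h | h
      · rw [← h, Real.zero_rpow (by positivity : (2:ℝ)*α ≠ 0), Real.zero_rpow hα.ne',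
          mul_zero]
      · rw [two_mul, Real.rpow_add h]
    rw [diagonal_mul_diagonal, hfun]
  rw [hDD]
  calc U * ((diagonal fun i => hA.1.eigenvalues i ^ α) *
        (diagonal fun i => hA.1.eigenvalues i ^ α)) * star U
      = U * (diagonal fun i => hA.1.eigenvalues i ^ α) * (star U * U) *
        (diagonal fun i => hA.1.eigenvalues i ^ α) * star U := by
        rw [hU1, Matrix.mul_one]; simp only [Matrix.mul_assoc]
    _ = U * (diagonal fun i => hA.1.eigenvalues i ^ α) * star U *
        (U * (diagonal fun i => hA.1.eigenvalues i ^ α) * star U) := by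
        simp only [Matrix.mul_assoc]

lemma psd_eq_of_mul_self_eq {X Y : Matrix (Fin n) (Fin n) ℝ} (hX : X.PosSemidef)
    (hY : Y.PosSemidef) (h : X * X = Y * Y) : X = Y := by
  rw [← CFC.sqrt_mul_self X hX.nonneg, ← CFC.sqrt_mul_self Y hY.nonneg, h]

noncomputable def eVal (X Y : Matrix (Fin n) (Fin n) ℝ) : ℝ :=
  (X*X).trace + (Y*Y).trace - 2 * (psdSqrt (X * (Y*Y) * X)).trace

lemma nucl_arg {X Y : Matrix (Fin n) (Fin n) ℝ} (hX : Xᵀ = X) (hY : Yᵀ = Y) :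
    X * (Y*Y) * X = (Y*X)ᵀ * (Y*X) := by
  rw [transpose_mul, hX, hY]
  simp only [Matrix.mul_assoc]

lemma fro_expand {X Y V : Matrix (Fin n) (Fin n) ℝ} (hX : Xᵀ = X) (hY : Yᵀ = Y)
    (hV : Vᵀ * V = 1) :
    ((X - V*Y)ᵀ * (X - V*Y)).trace
      = (X*X).trace + (Y*Y).trace - 2 * ((V*(Y*X)).trace) := by
  have h1 : (X - V*Y)ᵀ = X - Y*Vᵀ := by rw [transpose_sub, transpose_mul, hX, hY]
  rw [h1, Matrix.sub_mul, Matrix.mul_sub, Matrix.mul_sub]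
  rw [trace_sub, trace_sub, trace_sub]
  have e1 : (Y*Vᵀ*(V*Y)).trace = (Y*Y).trace := by
    have : Y*Vᵀ*(V*Y) = Y*((Vᵀ*V)*Y) := by simp only [Matrix.mul_assoc]
    rw [this, hV, Matrix.one_mul]
  have e2 : (X*(V*Y)).trace = (V*(Y*X)).trace := by
    rw [← Matrix.mul_assoc, Matrix.trace_mul_cycle X V Y, Matrix.trace_mul_cycle Y X V,
      Matrix.mul_assoc]
  have e3 : (Y*Vᵀ*X).trace = (V*(Y*X)).trace := by
    rw [← Matrix.trace_transpose (Y*Vᵀ*X), transpose_mul, transpose_mul,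
      transpose_transpose, hX, hY]
    exact e2
  linarith [e1, e2, e3]

lemma eVal_le {X Y : Matrix (Fin n) (Fin n) ℝ} (hX : X.PosSemidef) (hY : Y.PosSemidef)
    (V : Matrix (Fin n) (Fin n) ℝ) (hV : Vᵀ * V = 1) :
    eVal X Y ≤ ((X - V*Y)ᵀ * (X - V*Y)).trace := by
  rw [fro_expand (herm_transpose hX.1) (herm_transpose hY.1) hV]
  rw [eVal, nucl_arg (herm_transpose hX.1) (herm_transpose hY.1)]
  have := trace_orth_le (Y*X) V hV
  linarith

lemma eVal_attained {X Y : Matrix (Fin n) (Fin n) ℝ} (hX : X.PosSemidef) (hY : Y.PosSemidef) :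
    ∃ V : Matrix (Fin n) (Fin n) ℝ, Vᵀ * V = 1 ∧
      eVal X Y = ((X - V*Y)ᵀ * (X - V*Y)).trace := by
  obtain ⟨V, hV, htr⟩ := exists_orth_trace_eq (Y*X)
  refine ⟨V, hV, ?_⟩
  rw [fro_expand (herm_transpose hX.1) (herm_transpose hY.1) hV, eVal,
    nucl_arg (herm_transpose hX.1) (herm_transpose hY.1), htr]

lemma eVal_nonneg {X Y : Matrix (Fin n) (Fin n) ℝ} (hX : X.PosSemidef) (hY : Y.PosSemidef) :
    0 ≤ eVal X Y := by
  obtain ⟨V, hV, h⟩ := eVal_attained hX hY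
  rw [h]
  exact fro_nonneg _

lemma fro_orth_mul (V N : Matrix (Fin n) (Fin n) ℝ) (hV : Vᵀ * V = 1) :
    ((V*N)ᵀ * (V*N)).trace = (Nᵀ * N).trace := by
  rw [transpose_mul]
  have : Nᵀ * Vᵀ * (V * N) = Nᵀ * ((Vᵀ * V) * N) := by simp only [Matrix.mul_assoc]
  rw [this, hV, Matrix.one_mul]

lemma fro_neg (N : Matrix (Fin n) (Fin n) ℝ) : ((-N)ᵀ * (-N)).trace = (Nᵀ * N).trace := by
  simp

lemma eVal_comm {X Y : Matrix (Fin n) (Fin n) ℝ} (hX : X.PosSemidef) (hY : Y.PosSemidef) :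
    eVal X Y = eVal Y X := by
  have key : ∀ P Q : Matrix (Fin n) (Fin n) ℝ, P.PosSemidef → Q.PosSemidef →
      eVal Q P ≤ eVal P Q := by
    intro P Q hP hQ
    obtain ⟨V, hV, h⟩ := eVal_attained hP hQ
    have hV2 : V * Vᵀ = 1 := mul_eq_one_comm.mp hV
    have hfac : P - V*Q = V * (Vᵀ*P - Q) := by
      rw [Matrix.mul_sub, ← Matrix.mul_assoc, hV2, Matrix.one_mul]
    have hneg : Vᵀ*P - Q = -(Q - Vᵀ*P) := (neg_sub Q (Vᵀ*P)).symm
    have : eVal P Q = ((Q - Vᵀ*P)ᵀ * (Q - Vᵀ*P)).trace := by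
      rw [h, hfac, fro_orth_mul _ _ hV, hneg, fro_neg]
    rw [this]
    exact eVal_le hQ hP Vᵀ (by rw [transpose_transpose]; exact hV2)
  exact le_antisymm (key Y X hY hX) (key X Y hX hY)

lemma eVal_self {X : Matrix (Fin n) (Fin n) ℝ} (hX : X.PosSemidef) : eVal X X = 0 := by
  have hXX : (X*X).PosSemidef := psd_mul_self hX
  have hassoc : X * (X*X) * X = (X*X) * (X*X) := by simp only [Matrix.mul_assoc]
  have hM : (X * (X*X) * X).PosSemidef := by rw [hassoc]; exact psd_mul_self hXX
  have : psdSqrt (X * (X*X) * X) = X*X := psdSqrt_eq hM hXX hassoc.symm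
  rw [eVal, this]
  ring

end AlphaProcrustes

section
open Matrix
attribute [local instance] Matrix.frobeniusSeminormedAddCommGroup

/-- For fixed `α > 0`, the Alpha Procrustes distance
`d(A,B) = (1/α)(tr[A^{2α} + B^{2α} − 2(A^α B^{2α} A^α)^{1/2}])^{1/2}` is a metric on the set
of `n × n` real symmetric positive semi-definite matrices: it is nonnegative, symmetric,
vanishes exactly on the diagonal, and satisfies the triangle inequality. -/
theorem stmt7 {n : ℕ} (α : ℝ) (hα : 0 < α)
    (d : Matrix (Fin n) (Fin n) ℝ → Matrix (Fin n) (Fin n) ℝ → ℝ)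
    (hd : ∀ A B, d A B = (1 / α) * Real.sqrt ((matPow A (2 * α) + matPow B (2 * α)
        - 2 • psdSqrt (matPow A α * matPow B (2 * α) * matPow A α)).trace)) :
    (∀ A B : Matrix (Fin n) (Fin n) ℝ, A.PosSemidef → B.PosSemidef → 0 ≤ d A B) ∧
    (∀ A B : Matrix (Fin n) (Fin n) ℝ, A.PosSemidef → B.PosSemidef → d A B = d B A) ∧
    (∀ A B : Matrix (Fin n) (Fin n) ℝ, A.PosSemidef → B.PosSemidef → (d A B = 0 ↔ A = B)) ∧
    (∀ A B C : Matrix (Fin n) (Fin n) ℝ, A.PosSemidef → B.PosSemidef → C.PosSemidef →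
      d A C ≤ d A B + d B C) := by
  have hd' : ∀ A B : Matrix (Fin n) (Fin n) ℝ, A.PosSemidef → B.PosSemidef →
      d A B = (1/α) * Real.sqrt (eVal (matPow A α) (matPow B α)) := by
    intro A B hA hB
    rw [hd]
    congr 2
    rw [matPow_two_mul hA hα, matPow_two_mul hB hα]
    rw [trace_sub, trace_add, trace_smul, eVal]
    rw [nsmul_eq_mul]
    push_cast
    ring
  refine ⟨?_, ?_, ?_, ?_⟩
  · intro A B hA hB
    rw [hd]
    exact mul_nonneg (by positivity) (Real.sqrt_nonneg _)
  · intro A B hA hB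
    rw [hd' A B hA hB, hd' B A hB hA,
      eVal_comm (matPow_posSemidef hA α) (matPow_posSemidef hB α)]
  · intro A B hA hB
    have hX := matPow_posSemidef hA α
    have hY := matPow_posSemidef hB α
    set X := matPow A α with hXdef
    set Y := matPow B α with hYdef
    constructor
    · intro h
      rw [hd' A B hA hB] at h
      have hs : Real.sqrt (eVal X Y) = 0 := by
        rcases mul_eq_zero.mp h with h1 | h1
        · exact absurd h1 (by positivity)
        · exact h1
      have hE0 : eVal X Y = 0 := (Real.sqrt_eq_zero (eVal_nonneg hX hY)).mp hs
      obtain ⟨V, hV, hat⟩ := eVal_attained hX hY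
      have hzero : X - V*Y = 0 := fro_eq_zero (by rw [← hat]; exact hE0)
      have hXVY : X = V * Y := by rwa [sub_eq_zero] at hzero
      have hsq : X * X = Y * Y := by
        calc X*X = (V*Y)ᵀ * (V*Y) := by rw [← hXVY, herm_transpose hX.1]
          _ = Yᵀ * ((Vᵀ * V) * Y) := by rw [transpose_mul]; simp only [Matrix.mul_assoc]
          _ = Y * Y := by rw [hV, Matrix.one_mul, herm_transpose hY.1]
      have hXY : X = Y := psd_eq_of_mul_self_eq hX hY hsq
      exact matPow_injOn hα hA hB hXY
    · rintro rfl
      rw [hd' A A hA hA, eVal_self hX, Real.sqrt_zero, mul_zero]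
  · intro A B C hA hB hC
    have hX := matPow_posSemidef hA α
    have hY := matPow_posSemidef hB α
    have hZ := matPow_posSemidef hC α
    set X := matPow A α
    set Y := matPow B α
    set Z := matPow C α
    rw [hd' A C hA hC, hd' A B hA hB, hd' B C hB hC, ← mul_add]
    have h1α : (0:ℝ) ≤ 1/α := by positivity
    apply mul_le_mul_of_nonneg_left ?_ h1α
    obtain ⟨V, hV, hXY⟩ := eVal_attained hX hY
    obtain ⟨W, hW, hYZ⟩ := eVal_attained hY hZ
    have hVW : (V*W)ᵀ * (V*W) = 1 := by
      rw [transpose_mul]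
      calc Wᵀ * Vᵀ * (V * W) = Wᵀ * ((Vᵀ * V) * W) := by simp only [Matrix.mul_assoc]
        _ = 1 := by rw [hV, Matrix.one_mul, hW]
    have h1 : eVal X Z ≤ ((X - V*W*Z)ᵀ * (X - V*W*Z)).trace := eVal_le hX hZ _ hVW
    have h2 : Real.sqrt (eVal X Z) ≤ ‖X - V*W*Z‖ := by
      rw [← sqrt_fro_eq_norm]
      exact Real.sqrt_le_sqrt h1
    have h4 : ‖X - V*W*Z‖ ≤ ‖X - V*Y‖ + ‖V*Y - V*W*Z‖ := by
      have := norm_add_le (X - V*Y) (V*Y - V*W*Z)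
      rwa [sub_add_sub_cancel] at this
    have h5 : ‖V*Y - V*W*Z‖ = ‖Y - W*Z‖ := by
      rw [Matrix.mul_assoc, ← Matrix.mul_sub]
      rw [← sqrt_fro_eq_norm, ← sqrt_fro_eq_norm, fro_orth_mul _ _ hV]
    have hA1 : Real.sqrt (eVal X Y) = ‖X - V*Y‖ := by rw [hXY, sqrt_fro_eq_norm]
    have hA2 : Real.sqrt (eVal Y Z) = ‖Y - W*Z‖ := by rw [hYZ, sqrt_fro_eq_norm]
    rw [hA1, hA2]
    calc Real.sqrt (eVal X Z) ≤ ‖X - V*W*Z‖ := h2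
      _ ≤ ‖X - V*Y‖ + ‖V*Y - V*W*Z‖ := h4
      _ = ‖X - V*Y‖ + ‖Y - W*Z‖ := by rw [h5]

end
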